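/- Let m > 0, let χ_i, χ_j > 0 with |χ_i − χ_j| ≥ m and χ_i + χ_j ≥ m, and let 0 < ε' ≤ m/8. Then the averaged logarithm satisfies |(1/ε'²) ∫_{χ_i−ε'/2}^{χ_i+ε'/2} ∫_{χ_j−ε'/2}^{χ_j+ε'/2} log(|χ − χ'|/(χ + χ')) dχ dχ' − log(|χ_i − χ_j|/(χ_i + χ_j))| ≤ 2ε'/m. -/

import Mathlib

open MeasureTheory intervalIntegral Set

noncomputable def Phi (c h : ℝ) : ℝ :=
  (c + h) * Real.log (c + h) - (c - h) * Real.log (c - h) - 2 * h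

lemma logInt (c h : ℝ) (hh : 0 < h) (hc : h < c) :
    ∫ x in (c - h)..(c + h), Real.log x = Phi c h := by
  rw [integral_log]
  unfold Phi; ring

lemma illog (g : ℝ → ℝ) (hg : Continuous g) (p q : ℝ)
    (hpos : ∀ x ∈ Set.uIcc p q, g x ≠ 0) :
    IntervalIntegrable (fun x => Real.log (g x)) volume p q := by
  apply ContinuousOn.intervalIntegrable
  exact Real.continuousOn_log.comp hg.continuousOn
    (fun x hx => Set.mem_compl_singleton_iff.mpr (hpos x hx))

lemma illPhi (g : ℝ → ℝ) (hg : Continuous g) (h p q : ℝ)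
    (h1 : ∀ x ∈ Set.uIcc p q, g x + h ≠ 0) (h2 : ∀ x ∈ Set.uIcc p q, g x - h ≠ 0) :
    IntervalIntegrable (fun x => Phi (g x) h) volume p q := by
  apply ContinuousOn.intervalIntegrable
  unfold Phi
  have c1 : ContinuousOn (fun x => Real.log (g x + h)) (Set.uIcc p q) :=
    Real.continuousOn_log.comp (hg.add continuous_const).continuousOn
      (fun x hx => Set.mem_compl_singleton_iff.mpr (h1 x hx))
  have c2 : ContinuousOn (fun x => Real.log (g x - h)) (Set.uIcc p q) :=
    Real.continuousOn_log.comp (hg.sub continuous_const).continuousOn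
      (fun x hx => Set.mem_compl_singleton_iff.mpr (h2 x hx))
  exact (((hg.continuousOn.add continuousOn_const).mul c1).sub
    ((hg.continuousOn.sub continuousOn_const).mul c2)).sub continuousOn_const

lemma avg_log_bound (c h m0 : ℝ) (hh : 0 < h) (hm0 : h < m0) (hc : m0 ≤ c) :
    |Phi c h - 2 * h * Real.log c| ≤ h ^ 3 / (m0 ^ 2 - h ^ 2) := by
  have hch : h < c := lt_of_lt_of_le hm0 hc
  have hc0 : 0 < c := hh.trans hch
  have hden0 : 0 < m0 ^ 2 - h ^ 2 := by nlinarith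
  have hden1 : 0 < c ^ 2 - h ^ 2 := by nlinarith
  rw [← logInt c h hh hch]
  have hle : c - h ≤ c + h := by linarith
  have int1 : IntervalIntegrable Real.log volume (c - h) (c + h) :=
    illog (fun x => x) continuous_id _ _ (by
      intro x hx; rw [Set.uIcc_of_le hle] at hx
      intro h0; have h0' : x = 0 := h0; linarith [hx.1])
  have int2 : IntervalIntegrable (fun x => Real.log (2 * c - x)) volume (c - h) (c + h) :=
    illog (fun x => 2 * c - x) (by continuity) _ _ (by
      intro x hx; rw [Set.uIcc_of_le hle] at hx
      intro h0; have h0' : 2 * c - x = 0 := h0; linarith [hx.2])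
  have hrefl : (∫ x in (c - h)..(c + h), Real.log (2 * c - x))
      = ∫ x in (c - h)..(c + h), Real.log x := by
    rw [intervalIntegral.integral_comp_sub_left Real.log (2 * c)]
    congr 1 <;> ring
  have sum_eq : (∫ x in (c - h)..(c + h), (Real.log x + Real.log (2 * c - x)))
      = 2 * ∫ x in (c - h)..(c + h), Real.log x := by
    rw [intervalIntegral.integral_add int1 int2, hrefl]; ring
  have upper : (∫ x in (c - h)..(c + h), (Real.log x + Real.log (2 * c - x)))
      ≤ (2 * h) * (2 * Real.log c) := by
    have pw : ∀ x ∈ Set.Icc (c - h) (c + h),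
        Real.log x + Real.log (2 * c - x) ≤ 2 * Real.log c := by
      intro x hx
      have hx0 : 0 < x := by linarith [hx.1]
      have h2 : 0 < 2 * c - x := by linarith [hx.2]
      rw [← Real.log_mul hx0.ne' h2.ne']
      have hprod : x * (2 * c - x) ≤ c ^ 2 := by nlinarith [sq_nonneg (c - x)]
      calc Real.log (x * (2 * c - x)) ≤ Real.log (c ^ 2) := by
            gcongr
          _ = 2 * Real.log c := by rw [Real.log_pow]; push_cast; ring

    calc (∫ x in (c - h)..(c + h), (Real.log x + Real.log (2 * c - x)))
        ≤ ∫ _x in (c - h)..(c + h), 2 * Real.log c :=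
          intervalIntegral.integral_mono_on hle (int1.add int2)
            intervalIntegrable_const pw
      _ = (2 * h) * (2 * Real.log c) := by
          rw [intervalIntegral.integral_const, smul_eq_mul]; ring_nf
  have lower : (2 * h) * Real.log (c ^ 2 - h ^ 2)
      ≤ ∫ x in (c - h)..(c + h), (Real.log x + Real.log (2 * c - x)) := by
    have pw : ∀ x ∈ Set.Icc (c - h) (c + h),
        Real.log (c ^ 2 - h ^ 2) ≤ Real.log x + Real.log (2 * c - x) := by
      intro x hx
      have hx0 : 0 < x := by linarith [hx.1]
      have h2 : 0 < 2 * c - x := by linarith [hx.2]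
      rw [← Real.log_mul hx0.ne' h2.ne']
      have hprod : c ^ 2 - h ^ 2 ≤ x * (2 * c - x) := by
        nlinarith [mul_nonneg (by linarith [hx.1] : (0:ℝ) ≤ x - (c - h))
          (by linarith [hx.2] : (0:ℝ) ≤ (c + h) - x)]
      gcongr
    calc (2 * h) * Real.log (c ^ 2 - h ^ 2)
        = ∫ _x in (c - h)..(c + h), Real.log (c ^ 2 - h ^ 2) := by
          rw [intervalIntegral.integral_const, smul_eq_mul]; ring_nf
      _ ≤ _ := intervalIntegral.integral_mono_on hle intervalIntegrable_const
            (int1.add int2) pw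
  -- log (c^2) - log (c^2 - h^2) ≤ h^2/(c^2-h^2)
  have hlogdiff : Real.log (c ^ 2) - Real.log (c ^ 2 - h ^ 2) ≤ h ^ 2 / (c ^ 2 - h ^ 2) := by
    have e : Real.log (c ^ 2) - Real.log (c ^ 2 - h ^ 2)
        = Real.log (c ^ 2 / (c ^ 2 - h ^ 2)) :=
      (Real.log_div (by positivity) hden1.ne').symm
    have hb : Real.log (c ^ 2 / (c ^ 2 - h ^ 2)) ≤ c ^ 2 / (c ^ 2 - h ^ 2) - 1 :=
      Real.log_le_sub_one_of_pos (by positivity)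
    have e2 : c ^ 2 / (c ^ 2 - h ^ 2) - 1 = h ^ 2 / (c ^ 2 - h ^ 2) := by
      field_simp; ring
    rw [e]; rw [e2] at hb; exact hb
  have hmono : h ^ 3 / (c ^ 2 - h ^ 2) ≤ h ^ 3 / (m0 ^ 2 - h ^ 2) := by
    gcongr
    nlinarith
  have hlog2 : Real.log (c ^ 2) = 2 * Real.log c := by
    rw [Real.log_pow]; push_cast; ring
  rw [abs_le]
  constructor
  · -- lower bound
    have h1 : (2 * h) * Real.log (c ^ 2 - h ^ 2) ≤ 2 * ∫ x in (c - h)..(c + h), Real.log x := by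
      rw [← sum_eq]; exact lower
    have h2 : h * (Real.log (c ^ 2) - Real.log (c ^ 2 - h ^ 2)) ≤ h * (h ^ 2 / (c ^ 2 - h ^ 2)) :=
      mul_le_mul_of_nonneg_left hlogdiff hh.le
    have h3 : h * (h ^ 2 / (c ^ 2 - h ^ 2)) = h ^ 3 / (c ^ 2 - h ^ 2) := by
      field_simp
    nlinarith
  · have h1 : 2 * ∫ x in (c - h)..(c + h), Real.log x ≤ (2 * h) * (2 * Real.log c) := by
      rw [← sum_eq]; exact upper
    have h4 : 0 ≤ h ^ 3 / (m0 ^ 2 - h ^ 2) := by positivity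
    nlinarith

set_option maxHeartbeats 1600000 in
lemma core (m a b ε' : ℝ) (hm : 0 < m) (hb : 0 < b) (hab : b + m ≤ a)
    (hε' : 0 < ε') (hε'm : ε' ≤ m / 8) :
    |(1 / ε' ^ 2) *
        (∫ χ in (a - ε' / 2)..(a + ε' / 2),
          ∫ χ' in (b - ε' / 2)..(b + ε' / 2),
            Real.log (|χ - χ'| / (χ + χ'))) -
      Real.log ((a - b) / (a + b))| ≤ ε' / m := by
  set h : ℝ := ε' / 2 with hhdef
  have hh : 0 < h := by positivity
  have h16 : 16 * h ≤ m := by rw [hhdef]; linarith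
  have hsum : m ≤ a + b := by linarith
  have habm : m ≤ a - b := by linarith
  have hm0 : h < m - h := by linarith
  have hden : 0 < (m - h) ^ 2 - h ^ 2 := by nlinarith
  set δ : ℝ := h ^ 3 / ((m - h) ^ 2 - h ^ 2) with hδdef
  have hδ0 : 0 ≤ δ := by positivity
  have hle_out : a - h ≤ a + h := by linarith
  have hle_in : b - h ≤ b + h := by linarith
  have inner_eq : ∀ χ ∈ Set.uIcc (a - h) (a + h),
      (∫ χ' in (b - h)..(b + h), Real.log (|χ - χ'| / (χ + χ')))
        = Phi (χ - b) h - Phi (χ + b) h := by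
    intro χ hχ
    rw [Set.uIcc_of_le hle_out] at hχ
    obtain ⟨hχ1, hχ2⟩ := hχ
    have e1 : Set.EqOn (fun χ' => Real.log (|χ - χ'| / (χ + χ')))
        (fun χ' => Real.log (χ - χ') - Real.log (χ + χ')) (Set.uIcc (b - h) (b + h)) := by
      intro χ' hχ'
      rw [Set.uIcc_of_le hle_in] at hχ'
      have hd : 0 < χ - χ' := by linarith [hχ'.2]
      have hs : 0 < χ + χ' := by linarith [hχ'.1]
      simp only
      rw [abs_of_pos hd, Real.log_div hd.ne' hs.ne']
    rw [intervalIntegral.integral_congr e1]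
    have i1 : IntervalIntegrable (fun χ' => Real.log (χ - χ')) volume (b - h) (b + h) :=
      illog (fun χ' => χ - χ') (by continuity) _ _ (by
        intro x hx; rw [Set.uIcc_of_le hle_in] at hx
        intro h0; have h0' : χ - x = 0 := h0; linarith [hx.2])
    have i2 : IntervalIntegrable (fun χ' => Real.log (χ + χ')) volume (b - h) (b + h) :=
      illog (fun χ' => χ + χ') (by continuity) _ _ (by
        intro x hx; rw [Set.uIcc_of_le hle_in] at hx
        intro h0; have h0' : χ + x = 0 := h0; linarith [hx.1])
    rw [intervalIntegral.integral_sub i1 i2]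
    congr 1
    · rw [intervalIntegral.integral_comp_sub_left Real.log χ]
      rw [show χ - (b + h) = (χ - b) - h by ring, show χ - (b - h) = (χ - b) + h by ring]
      exact logInt _ _ hh (by linarith)
    · rw [intervalIntegral.integral_comp_add_left Real.log χ]
      rw [show χ + (b - h) = (χ + b) - h by ring, show χ + (b + h) = (χ + b) + h by ring]
      exact logInt _ _ hh (by linarith)
  rw [intervalIntegral.integral_congr inner_eq]
  have hout : ∀ x ∈ Set.uIcc (a - h) (a + h), a - h ≤ x ∧ x ≤ a + h := by
    intro x hx; rwa [Set.uIcc_of_le hle_out, Set.mem_Icc] at hx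
  have iE : IntervalIntegrable (fun χ => Phi (χ - b) h - Phi (χ + b) h)
      volume (a - h) (a + h) := by
    have e1 := illPhi (fun χ => χ - b) (by continuity) h (a - h) (a + h)
      (by intro x hx; intro h0; have h0' : x - b + h = 0 := h0; linarith [(hout x hx).1])
      (by intro x hx; intro h0; have h0' : x - b - h = 0 := h0; linarith [(hout x hx).1])
    have e2 := illPhi (fun χ => χ + b) (by continuity) h (a - h) (a + h)
      (by intro x hx; intro h0; have h0' : x + b + h = 0 := h0; linarith [(hout x hx).1])
      (by intro x hx; intro h0; have h0' : x + b - h = 0 := h0; linarith [(hout x hx).1])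
    exact e1.sub e2
  have i1o : IntervalIntegrable (fun χ => Real.log (χ - b)) volume (a - h) (a + h) :=
    illog (fun χ => χ - b) (by continuity) _ _
      (by intro x hx; intro h0; have h0' : x - b = 0 := h0; linarith [(hout x hx).1])
  have i2o : IntervalIntegrable (fun χ => Real.log (χ + b)) volume (a - h) (a + h) :=
    illog (fun χ => χ + b) (by continuity) _ _
      (by intro x hx; intro h0; have h0' : x + b = 0 := h0; linarith [(hout x hx).1])
  have iT : IntervalIntegrable (fun χ => Real.log (χ - b) - Real.log (χ + b))
      volume (a - h) (a + h) := i1o.sub i2o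
  have step1 : |(∫ χ in (a - h)..(a + h), (Phi (χ - b) h - Phi (χ + b) h))
      - 2 * h * (∫ χ in (a - h)..(a + h), (Real.log (χ - b) - Real.log (χ + b)))|
      ≤ 2 * δ * (2 * h) := by
    have e1 : 2 * h * (∫ χ in (a - h)..(a + h), (Real.log (χ - b) - Real.log (χ + b)))
        = ∫ χ in (a - h)..(a + h), 2 * h * (Real.log (χ - b) - Real.log (χ + b)) :=
      (intervalIntegral.integral_const_mul _ _).symm
    rw [e1, ← intervalIntegral.integral_sub iE (iT.const_mul _)]
    have pw : ∀ x ∈ Set.uIoc (a - h) (a + h),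
        ‖(Phi (x - b) h - Phi (x + b) h)
          - 2 * h * (Real.log (x - b) - Real.log (x + b))‖ ≤ 2 * δ := by
      intro x hx
      rw [Set.uIoc_of_le hle_out] at hx
      have hx1 : a - h ≤ x := hx.1.le
      have hx2 : x ≤ a + h := hx.2
      have b1 := avg_log_bound (x - b) h (m - h) hh hm0 (by linarith)
      have b2 := avg_log_bound (x + b) h (m - h) hh hm0 (by linarith)
      rw [Real.norm_eq_abs,
        show (Phi (x - b) h - Phi (x + b) h)
            - 2 * h * (Real.log (x - b) - Real.log (x + b))
          = (Phi (x - b) h - 2 * h * Real.log (x - b))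
            - (Phi (x + b) h - 2 * h * Real.log (x + b)) by ring]
      rw [abs_le] at b1 b2 ⊢
      constructor <;> linarith [b1.1, b1.2, b2.1, b2.2]
    have := intervalIntegral.norm_integral_le_of_norm_le_const pw
    rw [Real.norm_eq_abs] at this
    calc |_| ≤ 2 * δ * |(a + h) - (a - h)| := this
      _ = 2 * δ * (2 * h) := by
          rw [show (a + h) - (a - h) = 2 * h by ring, abs_of_pos (by positivity)]
  have step2 : (∫ χ in (a - h)..(a + h), (Real.log (χ - b) - Real.log (χ + b)))
      = Phi (a - b) h - Phi (a + b) h := by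
    rw [intervalIntegral.integral_sub i1o i2o]
    congr 1
    · rw [intervalIntegral.integral_comp_sub_right Real.log b]
      rw [show a - h - b = (a - b) - h by ring, show a + h - b = (a - b) + h by ring]
      exact logInt _ _ hh (by linarith)
    · rw [intervalIntegral.integral_comp_add_right Real.log b]
      rw [show a - h + b = (a + b) - h by ring, show a + h + b = (a + b) + h by ring]
      exact logInt _ _ hh (by linarith)
  have b3 := avg_log_bound (a - b) h (m - h) hh hm0 (by linarith)
  have b4 := avg_log_bound (a + b) h (m - h) hh hm0 (by linarith)
  set I := ∫ χ in (a - h)..(a + h), (Phi (χ - b) h - Phi (χ + b) h) with hI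
  have comb : |I - (4 * h ^ 2) * (Real.log (a - b) - Real.log (a + b))| ≤ 8 * h * δ := by
    have t1 : |I - 2 * h * (Phi (a - b) h - Phi (a + b) h)| ≤ 2 * δ * (2 * h) := by
      rw [← step2]; exact step1
    have hp : (0:ℝ) ≤ 2 * h := by positivity
    rw [abs_le] at t1 b3 b4 ⊢
    have q1 := mul_le_mul_of_nonneg_left b3.2 hp
    have q2 := mul_le_mul_of_nonneg_left b3.1 hp
    have q3 := mul_le_mul_of_nonneg_left b4.2 hp
    have q4 := mul_le_mul_of_nonneg_left b4.1 hp
    constructor <;> linarith [t1.1, t1.2, q1, q2, q3, q4]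
  have hab0 : (0:ℝ) < a - b := by linarith
  have hsum0 : (0:ℝ) < a + b := by linarith
  rw [Real.log_div hab0.ne' hsum0.ne']
  have hε2 : ε' = 2 * h := by rw [hhdef]; ring
  have key : 1 / ε' ^ 2 * I - (Real.log (a - b) - Real.log (a + b))
      = (I - (4 * h ^ 2) * (Real.log (a - b) - Real.log (a + b))) / (4 * h ^ 2) := by
    rw [hε2]; field_simp; ring
  rw [key, abs_div, abs_of_pos (show (0:ℝ) < 4 * h ^ 2 by positivity),
    div_le_iff₀ (by positivity : (0:ℝ) < 4 * h ^ 2)]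
  have final : 8 * h * δ ≤ ε' / m * (4 * h ^ 2) := by
    rw [hδdef, hε2]
    rw [show 8 * h * (h ^ 3 / ((m - h) ^ 2 - h ^ 2)) = 8 * h ^ 4 / ((m - h) ^ 2 - h ^ 2) by ring,
      show 2 * h / m * (4 * h ^ 2) = 8 * h ^ 3 / m by ring,
      div_le_div_iff₀ hden hm]
    have hkey : h * m ≤ (m - h) ^ 2 - h ^ 2 := by nlinarith
    have := mul_le_mul_of_nonneg_left hkey (show (0:ℝ) ≤ 8 * h ^ 3 by positivity)
    nlinarith [this]
  exact le_trans comb final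

set_option maxHeartbeats 1600000 in
lemma core' (m a b ε' : ℝ) (hm : 0 < m) (ha : 0 < a) (hab : a + m ≤ b)
    (hε' : 0 < ε') (hε'm : ε' ≤ m / 8) :
    |(1 / ε' ^ 2) *
        (∫ χ in (a - ε' / 2)..(a + ε' / 2),
          ∫ χ' in (b - ε' / 2)..(b + ε' / 2),
            Real.log (|χ - χ'| / (χ + χ'))) -
      Real.log ((b - a) / (a + b))| ≤ ε' / m := by
  set h : ℝ := ε' / 2 with hhdef
  have hh : 0 < h := by positivity
  have h16 : 16 * h ≤ m := by rw [hhdef]; linarith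
  have hsum : m ≤ a + b := by linarith
  have habm : m ≤ b - a := by linarith
  have hm0 : h < m - h := by linarith
  have hden : 0 < (m - h) ^ 2 - h ^ 2 := by nlinarith
  set δ : ℝ := h ^ 3 / ((m - h) ^ 2 - h ^ 2) with hδdef
  have hδ0 : 0 ≤ δ := by positivity
  have hle_out : a - h ≤ a + h := by linarith
  have hle_in : b - h ≤ b + h := by linarith
  have inner_eq : ∀ χ ∈ Set.uIcc (a - h) (a + h),
      (∫ χ' in (b - h)..(b + h), Real.log (|χ - χ'| / (χ + χ')))
        = Phi (b - χ) h - Phi (χ + b) h := by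
    intro χ hχ
    rw [Set.uIcc_of_le hle_out] at hχ
    obtain ⟨hχ1, hχ2⟩ := hχ
    have e1 : Set.EqOn (fun χ' => Real.log (|χ - χ'| / (χ + χ')))
        (fun χ' => Real.log (χ' - χ) - Real.log (χ + χ')) (Set.uIcc (b - h) (b + h)) := by
      intro χ' hχ'
      rw [Set.uIcc_of_le hle_in] at hχ'
      have hd : 0 < χ' - χ := by linarith [hχ'.1]
      have hs : 0 < χ + χ' := by linarith [hχ'.1]
      simp only
      rw [abs_sub_comm, abs_of_pos hd, Real.log_div hd.ne' hs.ne']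
    rw [intervalIntegral.integral_congr e1]
    have i1 : IntervalIntegrable (fun χ' => Real.log (χ' - χ)) volume (b - h) (b + h) :=
      illog (fun χ' => χ' - χ) (by continuity) _ _ (by
        intro x hx; rw [Set.uIcc_of_le hle_in] at hx
        intro h0; have h0' : x - χ = 0 := h0; linarith [hx.1])
    have i2 : IntervalIntegrable (fun χ' => Real.log (χ + χ')) volume (b - h) (b + h) :=
      illog (fun χ' => χ + χ') (by continuity) _ _ (by
        intro x hx; rw [Set.uIcc_of_le hle_in] at hx
        intro h0; have h0' : χ + x = 0 := h0; linarith [hx.1])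
    rw [intervalIntegral.integral_sub i1 i2]
    congr 1
    · rw [intervalIntegral.integral_comp_sub_right Real.log χ]
      rw [show b - h - χ = (b - χ) - h by ring, show b + h - χ = (b - χ) + h by ring]
      exact logInt _ _ hh (by linarith)
    · rw [intervalIntegral.integral_comp_add_left Real.log χ]
      rw [show χ + (b - h) = (χ + b) - h by ring, show χ + (b + h) = (χ + b) + h by ring]
      exact logInt _ _ hh (by linarith)
  rw [intervalIntegral.integral_congr inner_eq]
  have hout : ∀ x ∈ Set.uIcc (a - h) (a + h), a - h ≤ x ∧ x ≤ a + h := by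
    intro x hx; rwa [Set.uIcc_of_le hle_out, Set.mem_Icc] at hx
  have iE : IntervalIntegrable (fun χ => Phi (b - χ) h - Phi (χ + b) h)
      volume (a - h) (a + h) := by
    have e1 := illPhi (fun χ => b - χ) (by continuity) h (a - h) (a + h)
      (by intro x hx; intro h0; have h0' : b - x + h = 0 := h0; linarith [(hout x hx).2])
      (by intro x hx; intro h0; have h0' : b - x - h = 0 := h0; linarith [(hout x hx).2])
    have e2 := illPhi (fun χ => χ + b) (by continuity) h (a - h) (a + h)
      (by intro x hx; intro h0; have h0' : x + b + h = 0 := h0; linarith [(hout x hx).1])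
      (by intro x hx; intro h0; have h0' : x + b - h = 0 := h0; linarith [(hout x hx).1])
    exact e1.sub e2
  have i1o : IntervalIntegrable (fun χ => Real.log (b - χ)) volume (a - h) (a + h) :=
    illog (fun χ => b - χ) (by continuity) _ _
      (by intro x hx; intro h0; have h0' : b - x = 0 := h0; linarith [(hout x hx).2])
  have i2o : IntervalIntegrable (fun χ => Real.log (χ + b)) volume (a - h) (a + h) :=
    illog (fun χ => χ + b) (by continuity) _ _
      (by intro x hx; intro h0; have h0' : x + b = 0 := h0; linarith [(hout x hx).1])
  have iT : IntervalIntegrable (fun χ => Real.log (b - χ) - Real.log (χ + b))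
      volume (a - h) (a + h) := i1o.sub i2o
  have step1 : |(∫ χ in (a - h)..(a + h), (Phi (b - χ) h - Phi (χ + b) h))
      - 2 * h * (∫ χ in (a - h)..(a + h), (Real.log (b - χ) - Real.log (χ + b)))|
      ≤ 2 * δ * (2 * h) := by
    have e1 : 2 * h * (∫ χ in (a - h)..(a + h), (Real.log (b - χ) - Real.log (χ + b)))
        = ∫ χ in (a - h)..(a + h), 2 * h * (Real.log (b - χ) - Real.log (χ + b)) :=
      (intervalIntegral.integral_const_mul _ _).symm
    rw [e1, ← intervalIntegral.integral_sub iE (iT.const_mul _)]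
    have pw : ∀ x ∈ Set.uIoc (a - h) (a + h),
        ‖(Phi (b - x) h - Phi (x + b) h)
          - 2 * h * (Real.log (b - x) - Real.log (x + b))‖ ≤ 2 * δ := by
      intro x hx
      rw [Set.uIoc_of_le hle_out] at hx
      have hx1 : a - h ≤ x := hx.1.le
      have hx2 : x ≤ a + h := hx.2
      have b1 := avg_log_bound (b - x) h (m - h) hh hm0 (by linarith)
      have b2 := avg_log_bound (x + b) h (m - h) hh hm0 (by linarith)
      rw [Real.norm_eq_abs,
        show (Phi (b - x) h - Phi (x + b) h)
            - 2 * h * (Real.log (b - x) - Real.log (x + b))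
          = (Phi (b - x) h - 2 * h * Real.log (b - x))
            - (Phi (x + b) h - 2 * h * Real.log (x + b)) by ring]
      rw [abs_le] at b1 b2 ⊢
      constructor <;> linarith [b1.1, b1.2, b2.1, b2.2]
    have := intervalIntegral.norm_integral_le_of_norm_le_const pw
    rw [Real.norm_eq_abs] at this
    calc |_| ≤ 2 * δ * |(a + h) - (a - h)| := this
      _ = 2 * δ * (2 * h) := by
          rw [show (a + h) - (a - h) = 2 * h by ring, abs_of_pos (by positivity)]
  have step2 : (∫ χ in (a - h)..(a + h), (Real.log (b - χ) - Real.log (χ + b)))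
      = Phi (b - a) h - Phi (a + b) h := by
    rw [intervalIntegral.integral_sub i1o i2o]
    congr 1
    · rw [intervalIntegral.integral_comp_sub_left Real.log b]
      rw [show b - (a + h) = (b - a) - h by ring, show b - (a - h) = (b - a) + h by ring]
      exact logInt _ _ hh (by linarith)
    · rw [intervalIntegral.integral_comp_add_right Real.log b]
      rw [show a - h + b = (a + b) - h by ring, show a + h + b = (a + b) + h by ring]
      exact logInt _ _ hh (by linarith)
  have b3 := avg_log_bound (b - a) h (m - h) hh hm0 (by linarith)
  have b4 := avg_log_bound (a + b) h (m - h) hh hm0 (by linarith)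
  set I := ∫ χ in (a - h)..(a + h), (Phi (b - χ) h - Phi (χ + b) h) with hI
  have comb : |I - (4 * h ^ 2) * (Real.log (b - a) - Real.log (a + b))| ≤ 8 * h * δ := by
    have t1 : |I - 2 * h * (Phi (b - a) h - Phi (a + b) h)| ≤ 2 * δ * (2 * h) := by
      rw [← step2]; exact step1
    have hp : (0:ℝ) ≤ 2 * h := by positivity
    rw [abs_le] at t1 b3 b4 ⊢
    have q1 := mul_le_mul_of_nonneg_left b3.2 hp
    have q2 := mul_le_mul_of_nonneg_left b3.1 hp
    have q3 := mul_le_mul_of_nonneg_left b4.2 hp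
    have q4 := mul_le_mul_of_nonneg_left b4.1 hp
    constructor <;> linarith [t1.1, t1.2, q1, q2, q3, q4]
  have hab0 : (0:ℝ) < b - a := by linarith
  have hsum0 : (0:ℝ) < a + b := by linarith
  rw [Real.log_div hab0.ne' hsum0.ne']
  have hε2 : ε' = 2 * h := by rw [hhdef]; ring
  have key : 1 / ε' ^ 2 * I - (Real.log (b - a) - Real.log (a + b))
      = (I - (4 * h ^ 2) * (Real.log (b - a) - Real.log (a + b))) / (4 * h ^ 2) := by
    rw [hε2]; field_simp; ring
  rw [key, abs_div, abs_of_pos (show (0:ℝ) < 4 * h ^ 2 by positivity),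
    div_le_iff₀ (by positivity : (0:ℝ) < 4 * h ^ 2)]
  have final : 8 * h * δ ≤ ε' / m * (4 * h ^ 2) := by
    rw [hδdef, hε2]
    rw [show 8 * h * (h ^ 3 / ((m - h) ^ 2 - h ^ 2)) = 8 * h ^ 4 / ((m - h) ^ 2 - h ^ 2) by ring,
      show 2 * h / m * (4 * h ^ 2) = 8 * h ^ 3 / m by ring,
      div_le_div_iff₀ hden hm]
    have hkey : h * m ≤ (m - h) ^ 2 - h ^ 2 := by nlinarith
    have := mul_le_mul_of_nonneg_left hkey (show (0:ℝ) ≤ 8 * h ^ 3 by positivity)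
    nlinarith [this]
  exact le_trans comb final

theorem mollified_log_kernel_bound (m χi χj ε' : ℝ) (hm : 0 < m)
    (hχi : 0 < χi) (hχj : 0 < χj)
    (hsep : m ≤ |χi - χj|) (hsum : m ≤ χi + χj)
    (hε' : 0 < ε') (hε'm : ε' ≤ m / 8) :
    |(1 / ε' ^ 2) *
        (∫ χ in (χi - ε' / 2)..(χi + ε' / 2),
          ∫ χ' in (χj - ε' / 2)..(χj + ε' / 2),
            Real.log (|χ - χ'| / (χ + χ'))) -
      Real.log (|χi - χj| / (χi + χj))| ≤ 2 * ε' / m := by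
  have hbound : ε' / m ≤ 2 * ε' / m := by
    have h0 : 0 ≤ ε' / m := by positivity
    rw [show 2 * ε' / m = 2 * (ε' / m) by ring]
    linarith
  rcases le_total χj χi with hc | hc
  · have habs : |χi - χj| = χi - χj := abs_of_nonneg (by linarith)
    rw [habs] at hsep ⊢
    exact (core m χi χj ε' hm hχj (by linarith) hε' hε'm).trans hbound
  · have habs : |χi - χj| = χj - χi := by rw [abs_sub_comm]; exact abs_of_nonneg (by linarith)
    rw [habs] at hsep ⊢
    exact (core' m χi χj ε' hm hχi (by linarith) hε' hε'm).trans hbound
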